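/- Every solution (z_1, …, z_N) of the incremental problem (IP) satisfies, for each k = 1, …, N, the norm bound: ‖z_k‖ ≤ ‖z_0‖ + (I(0, z_0) + C_I · T)/c_D. -/

import Mathlib

open Filter Topology Set MeasureTheory
open scoped ENNReal

noncomputable section

/-- Weak convergence of a sequence in a normed space: convergence against every
continuous linear functional. -/
def WeakConv {X : Type*} [NormedAddCommGroup X] [NormedSpace ℝ X]
    (u : ℕ → X) (z : X) : Prop :=
  ∀ f : X →L[ℝ] ℝ, Tendsto (fun n => f (u n)) atTop (𝓝 (f z))

/-- A set is sequentially weakly compact if every sequence in it has a subsequence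
converging weakly to a point of the set. -/
def SeqWeaklyCompact {X : Type*} [NormedAddCommGroup X] [NormedSpace ℝ X]
    (S : Set X) : Prop :=
  ∀ u : ℕ → X, (∀ n, u n ∈ S) →
    ∃ z ∈ S, ∃ φ : ℕ → ℕ, StrictMono φ ∧ WeakConv (fun n => u (φ n)) z

/-- The dissipation of the curve `z` on the interval `[s,t]`, defined as the supremum
over all finite partitions `s = τ₀ < τ₁ < … < τ_N = t` of `∑ⱼ D (z τⱼ₋₁) (z τⱼ)`. -/
def Diss {X : Type*} (D : X → X → ℝ≥0∞) (z : ℝ → X) (s t : ℝ) : ℝ≥0∞ :=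
  ⨆ (N : ℕ) (τ : ℕ → ℝ) (_ : τ 0 = s) (_ : τ N = t)
    (_ : ∀ j < N, τ j < τ (j + 1)),
    ∑ j ∈ Finset.range N, D (z (τ j)) (z (τ (j + 1)))

/-- Theorem 3.1(iv): every solution of (IP) satisfies the norm bound
`‖z_k‖ ≤ ‖z_0‖ + (I(0,z_0) + C_I·T)/c_D`. -/
theorem incremental_norm_bound
    {X : Type*} [NormedAddCommGroup X] [NormedSpace ℝ X] [CompleteSpace X]
    (T cD CI : ℝ) (hT : 0 < T) (hcD : 0 < cD) (hCI : 0 < CI)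
    -- `D` is a dissipation distance:
    (D : X → X → ℝ≥0∞)
    (hD0 : ∀ z : X, D z z = 0)
    (hDtri : ∀ z1 z2 z3 : X, D z1 z3 ≤ D z1 z2 + D z2 z3)
    (hDcoer : ∀ z0 z1 : X, ENNReal.ofReal (cD * ‖z1 - z0‖) ≤ D z0 z1)
    (hDlsc : ∀ (u v : ℕ → X) (z w : X), WeakConv u z → WeakConv v w →
      D z w ≤ liminf (fun j => D (u j) (v j)) atTop)
    -- `I` is an energy-storage functional with partial time derivative `DI`:
    (I : ℝ → X → ℝ≥0∞) (DI : ℝ → X → ℝ)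
    (hIlsc : ∀ s ∈ Icc (0:ℝ) T, ∀ (u : ℕ → X) (z : X), WeakConv u z →
      I s z ≤ liminf (fun j => I s (u j)) atTop)
    (hIsmooth : ∀ z : X, (∃ s ∈ Icc (0:ℝ) T, I s z ≠ ⊤) →
      ∀ s ∈ Icc (0:ℝ) T, I s z ≠ ⊤ ∧
        HasDerivWithinAt (fun τ => (I τ z).toReal) (DI s z) (Icc (0:ℝ) T) s ∧
        |DI s z| ≤ CI)
    -- a partition `0 = t 0 < t 1 < … < t N = T` and an initial datum `z0`:
    (N : ℕ) (hN : 1 ≤ N) (t : ℕ → ℝ) (ht0 : t 0 = 0) (htN : t N = T)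
    (htlt : ∀ j < N, t j < t (j + 1))
    (z0 : X) (hz0 : I 0 z0 ≠ ⊤)
    -- `z 1, …, z N` is a solution of the incremental problem (IP):
    (z : ℕ → X) (hzinit : z 0 = z0)
    (hmin : ∀ k < N, ∀ w : X,
      I (t (k + 1)) (z (k + 1)) + D (z k) (z (k + 1)) ≤ I (t (k + 1)) w + D (z k) w) :
    ∀ k : ℕ, 1 ≤ k → k ≤ N →
      ‖z k‖ ≤ ‖z0‖ + ((I 0 z0).toReal + CI * T) / cD := by
  -- monotonicity of the partition
  have hmono : ∀ i j : ℕ, i ≤ j → j ≤ N → t i ≤ t j := by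
    intro i j hij
    induction j, hij using Nat.le_induction with
    | base => intro _; exact le_rfl
    | succ m him ih =>
      intro hmN
      exact (ih (Nat.le_of_succ_le hmN)).trans (htlt m (Nat.lt_of_succ_le hmN)).le
  have hmem : ∀ j : ℕ, j ≤ N → t j ∈ Icc (0:ℝ) T := by
    intro j hj
    constructor
    · rw [← ht0]; exact hmono 0 j (Nat.zero_le j) hj
    · rw [← htN]; exact hmono j N hj le_rfl
  -- key energy estimate
  have key : ∀ k : ℕ, k ≤ N →
      I (t k) (z k) + ∑ j ∈ Finset.range k, D (z j) (z (j + 1))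
        ≤ I 0 z0 + ENNReal.ofReal (CI * t k) ∧ I (t k) (z k) ≠ ⊤ := by
    intro k hkN
    induction k with
    | zero =>
      simp [ht0, hzinit, hz0]
    | succ k ih =>
      have hkN' : k ≤ N := Nat.le_of_succ_le hkN
      have hk1N : k + 1 ≤ N := hkN
      have hkltN : k < N := hkN
      obtain ⟨ihbound, ihfin⟩ := ih hkN'
      have htk : t k ∈ Icc (0:ℝ) T := hmem k hkN'
      have htk1 : t (k + 1) ∈ Icc (0:ℝ) T := hmem (k + 1) hk1N
      have hs := hIsmooth (z k) ⟨t k, htk, ihfin⟩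
      have hfin1 : I (t (k + 1)) (z k) ≠ ⊤ := (hs (t (k + 1)) htk1).1
      -- Lipschitz bound on τ ↦ (I τ (z k)).toReal
      have lip : (I (t (k + 1)) (z k)).toReal
          ≤ (I (t k) (z k)).toReal + CI * (t (k + 1) - t k) := by
        have hd : ∀ s ∈ Icc (0:ℝ) T,
            HasDerivWithinAt (fun τ => (I τ (z k)).toReal) (DI s (z k)) (Icc (0:ℝ) T) s :=
          fun s hs' => (hs s hs').2.1
        have hb : ∀ s ∈ Icc (0:ℝ) T, ‖DI s (z k)‖ ≤ CI := by
          intro s hs'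
          simpa [Real.norm_eq_abs] using (hs s hs').2.2
        have := (convex_Icc (0:ℝ) T).norm_image_sub_le_of_norm_hasDerivWithin_le
          hd hb htk htk1
        have habs : |(I (t (k + 1)) (z k)).toReal - (I (t k) (z k)).toReal|
            ≤ CI * (t (k + 1) - t k) := by
          have hΔ : (0:ℝ) ≤ t (k + 1) - t k := sub_nonneg.mpr ((htlt k hkltN).le)
          simpa [Real.norm_eq_abs, abs_of_nonneg hΔ] using this
        linarith [abs_le.mp habs]
      have hΔnn : (0:ℝ) ≤ CI * (t (k + 1) - t k) :=
        mul_nonneg hCI.le (sub_nonneg.mpr (htlt k hkltN).le)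
      have hItk1 : I (t (k + 1)) (z k)
          ≤ I (t k) (z k) + ENNReal.ofReal (CI * (t (k + 1) - t k)) := by
        rw [← ENNReal.ofReal_toReal hfin1, ← ENNReal.ofReal_toReal ihfin,
          ← ENNReal.ofReal_add ENNReal.toReal_nonneg hΔnn]
        exact ENNReal.ofReal_le_ofReal lip
      -- minimality against w = z k
      have hmin' : I (t (k + 1)) (z (k + 1)) + D (z k) (z (k + 1))
          ≤ I (t (k + 1)) (z k) := by
        have := hmin k hkltN (z k)
        simpa [hD0] using this
      have hofadd : ENNReal.ofReal (CI * t k) + ENNReal.ofReal (CI * (t (k + 1) - t k))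
          = ENNReal.ofReal (CI * t (k + 1)) := by
        rw [← ENNReal.ofReal_add (mul_nonneg hCI.le htk.1) hΔnn]
        ring_nf
      have main : I (t (k + 1)) (z (k + 1)) + ∑ j ∈ Finset.range (k + 1), D (z j) (z (j + 1))
          ≤ I 0 z0 + ENNReal.ofReal (CI * t (k + 1)) := by
        rw [Finset.sum_range_succ]
        calc I (t (k + 1)) (z (k + 1)) +
              (∑ j ∈ Finset.range k, D (z j) (z (j + 1)) + D (z k) (z (k + 1)))
            = (I (t (k + 1)) (z (k + 1)) + D (z k) (z (k + 1)))
              + ∑ j ∈ Finset.range k, D (z j) (z (j + 1)) := by ring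
          _ ≤ I (t (k + 1)) (z k) + ∑ j ∈ Finset.range k, D (z j) (z (j + 1)) :=
              add_le_add_left hmin' _
          _ ≤ (I (t k) (z k) + ENNReal.ofReal (CI * (t (k + 1) - t k)))
              + ∑ j ∈ Finset.range k, D (z j) (z (j + 1)) := add_le_add_left hItk1 _
          _ = (I (t k) (z k) + ∑ j ∈ Finset.range k, D (z j) (z (j + 1)))
              + ENNReal.ofReal (CI * (t (k + 1) - t k)) := by ring
          _ ≤ (I 0 z0 + ENNReal.ofReal (CI * t k))
              + ENNReal.ofReal (CI * (t (k + 1) - t k)) := add_le_add_left ihbound _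
          _ = I 0 z0 + ENNReal.ofReal (CI * t (k + 1)) := by
              rw [add_assoc, hofadd]
      refine ⟨main, ?_⟩
      have hle : I (t (k + 1)) (z (k + 1)) ≤ I 0 z0 + ENNReal.ofReal (CI * t (k + 1)) :=
        le_trans (le_add_right le_rfl) main
      exact ne_top_of_le_ne_top (ENNReal.add_ne_top.mpr ⟨hz0, ENNReal.ofReal_ne_top⟩) hle
  -- chain of triangle inequalities
  have chain : ∀ k : ℕ, D z0 (z k) ≤ ∑ j ∈ Finset.range k, D (z j) (z (j + 1)) := by
    intro k
    induction k with
    | zero => simp [hzinit, hD0]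
    | succ k ih =>
      rw [Finset.sum_range_succ]
      exact (hDtri z0 (z k) (z (k + 1))).trans (add_le_add_left ih _)
  -- conclude
  intro k hk1 hkN
  have htkT : t k ≤ T := by rw [← htN]; exact hmono k N hkN le_rfl
  have hB : ENNReal.ofReal (cD * ‖z k - z0‖) ≤ I 0 z0 + ENNReal.ofReal (CI * T) := by
    calc ENNReal.ofReal (cD * ‖z k - z0‖) ≤ D z0 (z k) := hDcoer z0 (z k)
      _ ≤ ∑ j ∈ Finset.range k, D (z j) (z (j + 1)) := chain k
      _ ≤ I (t k) (z k) + ∑ j ∈ Finset.range k, D (z j) (z (j + 1)) :=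
          le_add_left le_rfl
      _ ≤ I 0 z0 + ENNReal.ofReal (CI * t k) := (key k hkN).1
      _ ≤ I 0 z0 + ENNReal.ofReal (CI * T) := by
          exact add_le_add_right (ENNReal.ofReal_le_ofReal
            (mul_le_mul_of_nonneg_left htkT hCI.le)) _
  have hBne : I 0 z0 + ENNReal.ofReal (CI * T) ≠ ⊤ :=
    ENNReal.add_ne_top.mpr ⟨hz0, ENNReal.ofReal_ne_top⟩
  have hreal : cD * ‖z k - z0‖ ≤ (I 0 z0).toReal + CI * T := by
    have := (ENNReal.ofReal_le_iff_le_toReal hBne).mp hB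
    rwa [ENNReal.toReal_add hz0 ENNReal.ofReal_ne_top,
      ENNReal.toReal_ofReal (mul_nonneg hCI.le hT.le)] at this
  have hdiff : ‖z k - z0‖ ≤ ((I 0 z0).toReal + CI * T) / cD :=
    (le_div_iff₀ hcD).mpr (by linarith [hreal])
  have : ‖z k‖ ≤ ‖z0‖ + ‖z k - z0‖ := by
    calc ‖z k‖ = ‖z0 + (z k - z0)‖ := by rw [add_sub_cancel]
      _ ≤ ‖z0‖ + ‖z k - z0‖ := norm_add_le _ _
  linarith
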